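/- Let Θ ⊂ ℝ^d be a compact semianalytic set of dimension d, p = (p_1,…,p_m): Θ → Δ_{m−1} a polynomial map, and p̂ ∈ p(Θ) with all entries positive. Let f(θ) = Σ_{i=1}^m p̂_i log(p̂_i / p_i(θ)) be the normalized log-likelihood and g(θ) = Σ_{i=1}^m (p_i(θ) − p̂_i)² the sum of squares of the generators of the ideal ⟨p_1(θ)−p̂_1,…,p_m(θ)−p̂_m⟩. Then rlct_Θ(f) = rlct_Θ(g); that is, for every t > 0, θ ↦ f(θ)^{−t} is integrable on Θ if and only if θ ↦ g(θ)^{−t} is integrable on Θ. -/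

import Mathlib

open MeasureTheory Filter
open scoped ENNReal

section AuxiliaryLemmas

lemma mv_zero_set_null : ∀ {d : ℕ} (P : MvPolynomial (Fin d) ℝ), P ≠ 0 →
    volume {x : Fin d → ℝ | MvPolynomial.eval x P = 0} = 0 := by
  intro d
  induction d with
  | zero =>
    intro P hP
    convert measure_empty (μ := (volume : Measure (Fin 0 → ℝ)))
    ext x
    simp only [Set.mem_setOf_eq, Set.mem_empty_iff_false, iff_false]
    intro hx
    apply hP
    have hxx : MvPolynomial.eval x P = (MvPolynomial.isEmptyAlgEquiv ℝ (Fin 0)) P := by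
      have : MvPolynomial.eval x P = MvPolynomial.aeval x P := by
        rw [← MvPolynomial.coe_aeval_eq_eval]; rfl
      rw [this, MvPolynomial.isEmptyAlgEquiv_apply]
      conv_lhs => rw [MvPolynomial.eq_C_of_isEmpty P]
      simp
      exact congrArg (MvPolynomial.coeff · P) (Subsingleton.elim _ _)
    exact (map_eq_zero_iff _ (AlgEquiv.injective _)).mp (hxx ▸ hx)
  | succ n ih =>
    intro P hP
    classical
    set e := MeasurableEquiv.piFinSuccAbove (fun _ : Fin (n+1) => ℝ) 0 with he
    set S := {x : Fin (n+1) → ℝ | MvPolynomial.eval x P = 0} with hS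
    have hSmeas : MeasurableSet S :=
      (isClosed_eq (MvPolynomial.continuous_eval P) continuous_const).measurableSet
    have hφ : MeasurePreserving (⇑e.symm ∘ Prod.swap)
        ((volume : Measure (Fin n → ℝ)).prod (volume : Measure ℝ)) volume :=
      ((volume_preserving_piFinSuccAbove (fun _ : Fin (n+1) => ℝ) 0).symm e).comp
        Measure.measurePreserving_swap
    have key : volume S = ((volume : Measure (Fin n → ℝ)).prod (volume : Measure ℝ))
        ((⇑e.symm ∘ Prod.swap) ⁻¹' S) := (hφ.measure_preimage hSmeas.nullMeasurableSet).symm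
    rw [key]
    set B := (⇑e.symm ∘ Prod.swap) ⁻¹' S with hB
    have hBmeas : MeasurableSet B :=
      (e.symm.measurable.comp measurable_swap) hSmeas
    rw [Measure.measure_prod_null hBmeas]
    -- pick a nonzero coefficient
    have hQ : MvPolynomial.finSuccEquiv ℝ n P ≠ 0 := by
      intro h
      exact hP ((map_eq_zero_iff _ (AlgEquiv.injective _)).mp h)
    have hQex : ∃ k, (MvPolynomial.finSuccEquiv ℝ n P).coeff k ≠ 0 := by
      by_contra hcon
      push_neg at hcon
      exact hQ (Polynomial.ext fun k => by simp [hcon k])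
    obtain ⟨k, hk⟩ := hQex
    have hN := ih _ hk
    have hae : ∀ᵐ s : (Fin n → ℝ) ∂volume,
        MvPolynomial.eval s ((MvPolynomial.finSuccEquiv ℝ n P).coeff k) ≠ 0 := by
      rw [ae_iff]
      simpa using hN
    filter_upwards [hae] with s hs
    have hQs : (Polynomial.map (MvPolynomial.eval s) (MvPolynomial.finSuccEquiv ℝ n P)) ≠ 0 := by
      intro h
      apply hs
      have := congrArg (fun q => Polynomial.coeff q k) h
      simpa [Polynomial.coeff_map] using this
    have hsec : Prod.mk s ⁻¹' B =
        {y : ℝ | Polynomial.eval y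
          (Polynomial.map (MvPolynomial.eval s) (MvPolynomial.finSuccEquiv ℝ n P)) = 0} := by
      ext y
      simp only [hB, Set.mem_preimage, Function.comp_apply, Prod.swap_prod_mk, hS,
        Set.mem_setOf_eq, he, MeasurableEquiv.piFinSuccAbove_symm_apply, Fin.insertNthEquiv_zero, Fin.consEquiv_apply]
      rw [show ((Fin.consEquiv fun _ : Fin (n+1) => ℝ) (y, s)) = Fin.cons y s from rfl,
        MvPolynomial.eval_eq_eval_mv_eval']
    simp only [Pi.zero_apply]
    rw [hsec]
    exact Set.Finite.measure_zero (Polynomial.finite_setOf_isRoot hQs) _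


lemma log_lower {x y : ℝ} (hx : 0 < x) (hx1 : x ≤ 1) (hy : 0 < y) (hy1 : y ≤ 1) :
    (x - y) + (x - y)^2/2 ≤ x * Real.log (x / y) := by
  have hlog : x * Real.log (x / y) = x * (Real.log x - Real.log y) := by
    rw [Real.log_div hx.ne' hy.ne']
  set h : ℝ → ℝ := fun t => x * (Real.log x - Real.log t) + t - x - (x - t)^2/2 with hh
  have hx0 : h x = 0 := by simp [hh]
  have hderiv : ∀ t : ℝ, 0 < t → HasDerivAt h (1 - x/t + (x - t)) t := by
    intro t ht
    have h1 : HasDerivAt (fun t : ℝ => x * (Real.log x - Real.log t)) (x * -t⁻¹) t :=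
      ((Real.hasDerivAt_log ht.ne').const_sub (Real.log x)).const_mul x
    have h2 : HasDerivAt (fun t : ℝ => (x - t)^2/2) ((2 * (x - t)^1 * (0 - 1)) / 2) t :=
      (((hasDerivAt_const t x).sub (hasDerivAt_id t)).pow 2).div_const 2
    have h3 := ((h1.add (hasDerivAt_id t)).sub_const x).sub h2
    exact h3.congr_deriv (by ring)
  have hderiv_eq : ∀ t : ℝ, 0 < t → deriv h t = (t - x) * (1 - t) / t := by
    intro t ht
    rw [(hderiv t ht).deriv]
    field_simp
    ring
  have key : 0 ≤ h y := by
    rcases le_total y x with hyx | hxy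
    · have hanti : AntitoneOn h (Set.Icc y x) := by
        apply antitoneOn_of_deriv_nonpos (convex_Icc y x)
        · intro t ht
          exact (hderiv t (lt_of_lt_of_le hy ht.1)).continuousAt.continuousWithinAt
        · intro t ht
          rw [interior_Icc] at ht
          exact (hderiv t (hy.trans ht.1)).differentiableAt.differentiableWithinAt
        · intro t ht
          rw [interior_Icc] at ht
          have ht0 : 0 < t := hy.trans ht.1
          rw [hderiv_eq t ht0]
          apply div_nonpos_of_nonpos_of_nonneg _ ht0.le
          apply mul_nonpos_of_nonpos_of_nonneg <;> nlinarith [ht.1, ht.2]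
      have := hanti (Set.left_mem_Icc.mpr hyx) (Set.right_mem_Icc.mpr hyx) hyx
      linarith [hx0 ▸ this]
    · have hmono : MonotoneOn h (Set.Icc x y) := by
        apply monotoneOn_of_deriv_nonneg (convex_Icc x y)
        · intro t ht
          exact (hderiv t (lt_of_lt_of_le hx ht.1)).continuousAt.continuousWithinAt
        · intro t ht
          rw [interior_Icc] at ht
          exact (hderiv t (hx.trans ht.1)).differentiableAt.differentiableWithinAt
        · intro t ht
          rw [interior_Icc] at ht
          have ht0 : 0 < t := hx.trans ht.1
          rw [hderiv_eq t ht0]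
          apply div_nonneg _ ht0.le
          apply mul_nonneg <;> nlinarith [ht.1, ht.2]
      have := hmono (Set.left_mem_Icc.mpr hxy) (Set.right_mem_Icc.mpr hxy) hxy
      linarith [hx0 ▸ this]
  rw [hlog]
  simp only [hh] at key
  nlinarith [key]

lemma log_upper {x y : ℝ} (hx : 0 ≤ x) (hy : 0 < y) :
    x * Real.log (x / y) ≤ (x - y)^2 / y + (x - y) := by
  rcases eq_or_lt_of_le hx with rfl | hx'
  · have : ((0:ℝ) - y)^2 / y + ((0:ℝ) - y) = 0 := by field_simp; ring
    rw [zero_mul, this]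
  have h1 : Real.log (x / y) ≤ x / y - 1 := Real.log_le_sub_one_of_pos (div_pos hx' hy)
  have h2 : x * Real.log (x / y) ≤ x * (x / y - 1) := by
    apply mul_le_mul_of_nonneg_left h1 hx
  have h3 : x * (x / y - 1) = (x - y)^2 / y + (x - y) := by
    field_simp
    ring
  linarith


theorem main_iff {d m : ℕ}
    (Θ : Set (Fin d → ℝ)) (hΘc : IsCompact Θ)
    (p : Fin m → (Fin d → ℝ) → ℝ)
    (hp : ∀ i, ∃ P : MvPolynomial (Fin d) ℝ, ∀ x, p i x = MvPolynomial.eval x P)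
    (hsimplex : ∀ θ ∈ Θ, (∀ i, 0 ≤ p i θ) ∧ ∑ i, p i θ = 1)
    (phat : Fin m → ℝ)
    (hmodel : ∃ θ ∈ Θ, ∀ i, p i θ = phat i)
    (hpos : ∀ i, 0 < phat i) :
    ∀ t : ℝ, 0 < t →
      (IntegrableOn
          (fun θ => (∑ i, phat i * Real.log (phat i / p i θ)) ^ (-t)) Θ volume ↔
        IntegrableOn (fun θ => (∑ i, (p i θ - phat i) ^ 2) ^ (-t)) Θ volume) := by
  classical
  obtain ⟨θ0, hθ0, hpθ0⟩ := hmodel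
  set F : (Fin d → ℝ) → ℝ := fun θ => ∑ i, phat i * Real.log (phat i / p i θ) with hF
  set G : (Fin d → ℝ) → ℝ := fun θ => ∑ i, (p i θ - phat i) ^ 2 with hG
  have hΘmeas : MeasurableSet Θ := hΘc.isClosed.measurableSet
  -- basic facts about phat
  have hsumhat : ∑ i, phat i = 1 := by
    have := (hsimplex θ0 hθ0).2
    simpa [hpθ0] using this
  have hphat1 : ∀ i, phat i ≤ 1 := by
    intro i
    rw [← hsumhat]
    exact Finset.single_le_sum (fun j _ => (hpos j).le) (Finset.mem_univ i)
  have hm : Nonempty (Fin m) := by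
    by_contra hcon
    rw [not_nonempty_iff] at hcon
    rw [Finset.univ_eq_empty, Finset.sum_empty] at hsumhat
    norm_num at hsumhat
  -- the minimum entry of phat
  set ε : ℝ := Finset.univ.inf' (Finset.univ_nonempty) phat with hε
  have hεpos : 0 < ε := by
    obtain ⟨i, -, hi⟩ := Finset.exists_mem_eq_inf' (Finset.univ_nonempty) phat
    rw [hε, hi]; exact hpos i
  have hεle : ∀ i, ε ≤ phat i := fun i => Finset.inf'_le _ (Finset.mem_univ i)
  have hε1 : ε ≤ 1 := (hεle (Classical.arbitrary _)).trans (hphat1 _)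
  -- continuity and measurability of the p i, F, G
  have hpc : ∀ i, Continuous (p i) := by
    intro i
    obtain ⟨P, hP⟩ := hp i
    have : p i = fun x => MvPolynomial.eval x P := funext hP
    rw [this]
    exact MvPolynomial.continuous_eval P
  have hFme : Measurable F := by
    apply Finset.measurable_sum
    intro i _
    exact (Real.measurable_log.comp (measurable_const.div (hpc i).measurable)).const_mul _
  have hGc : Continuous G := by
    apply continuous_finset_sum
    intro i _
    exact ((hpc i).sub continuous_const).pow 2
  have hGnn : ∀ θ, 0 ≤ G θ := fun θ => Finset.sum_nonneg fun i _ => sq_nonneg _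
  -- the union of the zero sets of the `p i` is null
  have hZnull : ∀ᵐ θ ∂(volume : Measure (Fin d → ℝ)), ∀ i, p i θ ≠ 0 := by
    rw [ae_all_iff]
    intro i
    obtain ⟨P, hP⟩ := hp i
    have hPne : P ≠ 0 := by
      intro hcon
      have := hP θ0
      rw [hcon, map_zero, hpθ0 i] at this
      exact (hpos i).ne' this
    rw [ae_iff]
    have : {θ | ¬ p i θ ≠ 0} = {x | MvPolynomial.eval x P = 0} := by
      ext x; simp [hP x]
    rw [this]
    exact mv_zero_set_null P hPne
  -- pointwise bounds at good points of Θ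
  have hkey : ∀ θ ∈ Θ, (∀ i, p i θ ≠ 0) →
      G θ / 2 ≤ F θ ∧ F θ ≤ ∑ i, (p i θ - phat i)^2 / p i θ := by
    intro θ hθ hne
    obtain ⟨hnn, hsum⟩ := hsimplex θ hθ
    have hall : ∀ i, 0 < p i θ := fun i => lt_of_le_of_ne (hnn i) (Ne.symm (hne i))
    have hple1 : ∀ i, p i θ ≤ 1 := by
      intro i
      rw [← hsum]
      exact Finset.single_le_sum (fun j _ => (hnn j)) (Finset.mem_univ i)
    have e1 : ∑ i, (phat i - p i θ) = 0 := by
      rw [Finset.sum_sub_distrib, hsum, hsumhat]; ring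
    have e2 : ∑ i, (phat i - p i θ)^2 = G θ :=
      Finset.sum_congr rfl fun i _ => by ring
    constructor
    · have h1 : ∑ i, ((phat i - p i θ) + (phat i - p i θ)^2/2) ≤ F θ :=
        Finset.sum_le_sum fun i _ =>
          log_lower (hpos i) (hphat1 i) (hall i) (hple1 i)
      have h2 : ∑ i, ((phat i - p i θ) + (phat i - p i θ)^2/2) = G θ / 2 := by
        rw [Finset.sum_add_distrib, e1, ← Finset.sum_div, e2]; ring
      linarith [h2 ▸ h1]
    · have h1 : F θ ≤ ∑ i, ((phat i - p i θ)^2 / p i θ + (phat i - p i θ)) :=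
        Finset.sum_le_sum fun i _ => log_upper (hpos i).le (hall i)
      have h2 : ∑ i, ((phat i - p i θ)^2 / p i θ + (phat i - p i θ))
          = ∑ i, (p i θ - phat i)^2 / p i θ := by
        rw [Finset.sum_add_distrib, e1, add_zero]
        exact Finset.sum_congr rfl fun i _ => by ring
      linarith [h2 ▸ h1]
  intro t ht
  have htne : -t ≠ 0 := by linarith
  -- measurability of the two integrands
  have hGrme : Measurable (fun θ => G θ ^ (-t)) := by
    have : (fun θ => G θ ^ (-t)) = fun θ => ((G θ)⁻¹) ^ t := by
      funext θ
      rw [Real.rpow_neg (hGnn θ), ← Real.inv_rpow (hGnn θ)]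
    rw [this]
    exact (Real.continuous_rpow_const ht.le).measurable.comp hGc.measurable.inv
  have hFaesm : AEStronglyMeasurable (fun θ => F θ ^ (-t)) (volume.restrict Θ) := by
    apply (((Real.continuous_rpow_const ht.le).measurable.comp
      hFme.inv).aestronglyMeasurable).congr
    filter_upwards [ae_restrict_of_ae hZnull, ae_restrict_mem hΘmeas] with θ hθZ hθΘ
    have hFnn : 0 ≤ F θ := le_trans (by positivity) ((hkey θ hθΘ hθZ).1)
    rw [Real.rpow_neg hFnn, ← Real.inv_rpow hFnn]
    rfl
  constructor
  · -- F integrable → G integrable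
    intro hf
    set C : ℝ := 2 / ε with hC
    have hCpos : 0 < C := by positivity
    set δ : ℝ := (ε/2)^2 with hδ
    have hδpos : 0 < δ := by positivity
    have hbound : IntegrableOn
        (fun θ => C ^ t * ‖F θ ^ (-t)‖ + δ ^ (-t)) Θ volume := by
      refine (hf.norm.const_mul _).add ?_
      exact integrableOn_const hΘc.measure_lt_top.ne
    apply Integrable.mono' hbound (hGrme.aestronglyMeasurable.restrict)
    filter_upwards [ae_restrict_of_ae hZnull, ae_restrict_mem hΘmeas] with θ hθZ hθΘ
    have hterm_nn : 0 ≤ C ^ t * ‖F θ ^ (-t)‖ :=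
      mul_nonneg (Real.rpow_nonneg hCpos.le t) (norm_nonneg _)
    rw [Real.norm_of_nonneg (Real.rpow_nonneg (hGnn θ) _)]
    rcases le_or_gt δ (G θ) with hδG | hGδ
    · have : G θ ^ (-t) ≤ δ ^ (-t) :=
        Real.rpow_le_rpow_of_nonpos hδpos hδG (by linarith)
      linarith
    · -- G θ < δ : all p i θ ≥ ε/2
      have hplow : ∀ i, ε/2 < p i θ := by
        intro i
        have h1 : (p i θ - phat i)^2 ≤ G θ :=
          Finset.single_le_sum (f := fun j => (p j θ - phat j)^2)
            (fun j _ => sq_nonneg _) (Finset.mem_univ i)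
        have h2 : (p i θ - phat i)^2 < (ε/2)^2 := lt_of_le_of_lt h1 hGδ
        nlinarith [hεle i, hεpos]
      obtain ⟨hlow, hup⟩ := hkey θ hθΘ hθZ
      have hupC : F θ ≤ C * G θ := by
        calc F θ ≤ ∑ i, (p i θ - phat i)^2 / p i θ := hup
          _ ≤ ∑ i, C * (p i θ - phat i)^2 := by
              apply Finset.sum_le_sum
              intro i _
              rw [div_le_iff₀ (lt_trans (by positivity) (hplow i))]
              have h2p : 1 ≤ C * p i θ := by
                rw [hC]
                rw [div_mul_eq_mul_div, le_div_iff₀ hεpos, one_mul]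
                linarith [hplow i]
              nlinarith [sq_nonneg (p i θ - phat i), lt_trans (show (0:ℝ) < ε/2 by positivity) (hplow i)]
          _ = C * G θ := by rw [← Finset.mul_sum]
      rcases eq_or_lt_of_le (hGnn θ) with hG0 | hGpos
      · rw [← hG0, Real.zero_rpow htne]
        have h4 : 0 ≤ δ ^ (-t) := Real.rpow_nonneg hδpos.le _
        linarith
      · have hFpos : 0 < F θ := lt_of_lt_of_le (by positivity) hlow
        have hGF : F θ / C ≤ G θ := by
          rw [div_le_iff₀ hCpos]
          calc F θ ≤ C * G θ := hupC
            _ = G θ * C := by ring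
        have h1 : G θ ^ (-t) ≤ (F θ / C) ^ (-t) :=
          Real.rpow_le_rpow_of_nonpos (by positivity) hGF (by linarith)
        have h2 : (F θ / C) ^ (-t) = C ^ t * F θ ^ (-t) := by
          rw [Real.div_rpow hFpos.le hCpos.le, Real.rpow_neg hCpos.le,
            div_eq_mul_inv, inv_inv, mul_comm]
        have h3 : F θ ^ (-t) = ‖F θ ^ (-t)‖ :=
          (Real.norm_of_nonneg (Real.rpow_nonneg hFpos.le _)).symm
        have h4 : 0 ≤ δ ^ (-t) := Real.rpow_nonneg hδpos.le _
        rw [h2, h3] at h1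
        linarith
  · -- G integrable → F integrable
    intro hg
    have hbound : IntegrableOn (fun θ => 2 ^ t * (G θ ^ (-t))) Θ volume :=
      hg.const_mul _
    apply Integrable.mono' hbound hFaesm
    filter_upwards [ae_restrict_of_ae hZnull, ae_restrict_mem hΘmeas] with θ hθZ hθΘ
    obtain ⟨hlow, hup⟩ := hkey θ hθΘ hθZ
    have hFnn : 0 ≤ F θ := le_trans (by positivity) hlow
    rw [Real.norm_of_nonneg (Real.rpow_nonneg hFnn _)]
    rcases eq_or_lt_of_le (hGnn θ) with hG0 | hGpos
    · -- G θ = 0 forces F θ = 0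
      have hterms : ∀ i, (p i θ - phat i)^2 = 0 := by
        intro i
        have h1 : (p i θ - phat i)^2 ≤ G θ :=
          Finset.single_le_sum (f := fun j => (p j θ - phat j)^2)
            (fun j _ => sq_nonneg _) (Finset.mem_univ i)
        have h2 := sq_nonneg (p i θ - phat i)
        linarith
      have hF0 : F θ = 0 := by
        have : F θ ≤ 0 := by
          calc F θ ≤ ∑ i, (p i θ - phat i)^2 / p i θ := hup
            _ = 0 := Finset.sum_eq_zero fun i _ => by rw [hterms i, zero_div]
        linarith
      rw [hF0, Real.zero_rpow htne, ← hG0, Real.zero_rpow htne]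
      simp
    · have hFpos : 0 < F θ := lt_of_lt_of_le (by positivity) hlow
      have h1 : F θ ^ (-t) ≤ (G θ / 2) ^ (-t) :=
        Real.rpow_le_rpow_of_nonpos (by positivity) hlow (by linarith)
      have h2 : (G θ / 2) ^ (-t) = 2 ^ t * G θ ^ (-t) := by
        rw [Real.div_rpow (hGnn θ) (by norm_num : (0:ℝ) ≤ 2),
          Real.rpow_neg (by norm_num : (0:ℝ) ≤ 2), div_eq_mul_inv, inv_inv, mul_comm]
      rw [h2] at h1
      exact h1

section Statement


open MeasureTheory Filter
open scoped ENNReal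

namespace GeneralModel

/-- A set is semianalytic (in the global form used in the paper) if it is cut out by
finitely many inequalities `g i ≥ 0` with `g i` real analytic. -/
def Semianalytic {d : ℕ} (Θ : Set (Fin d → ℝ)) : Prop :=
  ∃ (l : ℕ) (g : Fin l → (Fin d → ℝ) → ℝ),
    (∀ i, AnalyticOnNhd ℝ (g i) Set.univ) ∧ Θ = {x | ∀ i, 0 ≤ g i x}

/-- `M` is a `d'`-dimensional smooth submanifold of `ℝ^d`: near each of its points it is
the zero set of a smooth submersion into `ℝ^{d-d'}`. -/
def IsSmoothSubmanifold {d : ℕ} (d' : ℕ) (M : Set (Fin d → ℝ)) : Prop :=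
  ∀ x ∈ M, ∃ U : Set (Fin d → ℝ), IsOpen U ∧ x ∈ U ∧
    ∃ F : (Fin d → ℝ) → (Fin (d - d') → ℝ),
      ContDiffOn ℝ ((⊤ : ℕ∞) : WithTop ℕ∞) F U ∧
      (∀ y ∈ U, Function.Surjective (fderiv ℝ F y)) ∧
      M ∩ U = {y ∈ U | F y = 0}

/-- A map `p : ℝ^d → ℝ^m` is polynomial if each coordinate function is given by a
polynomial. -/
def IsPolynomialMap {d m : ℕ} (p : Fin m → (Fin d → ℝ) → ℝ) : Prop :=
  ∀ i, ∃ P : MvPolynomial (Fin d) ℝ, ∀ x, p i x = MvPolynomial.eval x P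

/-- The marginal likelihood `Z(N) = ∫_Θ ∏_i p_i(θ)^{N p̂_i} φ(θ) dθ`. -/
noncomputable def margLik {d m : ℕ} (Θ : Set (Fin d → ℝ)) (p : Fin m → (Fin d → ℝ) → ℝ)
    (phat : Fin m → ℝ) (φ : (Fin d → ℝ) → ℝ) (N : ℕ) : ℝ :=
  ∫ θ in Θ, (∏ i, p i θ ^ ((N : ℝ) * phat i)) * φ θ

/-- The maximal value `ℓ̂_N = N ∑_i p̂_i log p̂_i` of the log-likelihood. -/
noncomputable def maxLogLik {m : ℕ} (phat : Fin m → ℝ) (N : ℕ) : ℝ :=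
  (N : ℝ) * ∑ i, phat i * Real.log (phat i)

end GeneralModel

open GeneralModel


/-- The real log-canonical threshold of a nonnegative function `f` on `Θ`, in its
integrability characterization: `rlct_Θ(f) = sup {t > 0 : ∫_Θ f^{-t} < ∞}`. -/
noncomputable def rlct {d : ℕ} (Θ : Set (Fin d → ℝ)) (f : (Fin d → ℝ) → ℝ) : ℝ :=
  sSup {t : ℝ | 0 < t ∧ IntegrableOn (fun θ => f θ ^ (-t)) Θ volume}

/-- Theorem 4.1 of the paper, in its integrability form.  Let `Θ ⊂ ℝ^d`
be a compact semianalytic set of dimension `d`, `p : Θ → Δ_{m−1}` a polynomial map,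
`p̂ ∈ p(Θ)` with positive entries, `f(θ) = ∑_i p̂_i log(p̂_i/p_i(θ))` the normalized
log-likelihood and `g(θ) = ∑_i (p_i(θ) − p̂_i)²` the sum of squares of the generators of
the ideal `⟨p_1(θ) − p̂_1, …, p_m(θ) − p̂_m⟩`.  Then `rlct_Θ(f) = rlct_Θ(g)`: for every
`t > 0`, `f^{-t}` is integrable on `Θ` if and only if `g^{-t}` is. -/
theorem rlct_loglik_eq_rlct_ideal {d m : ℕ}
    (Θ : Set (Fin d → ℝ)) (hΘc : IsCompact Θ) (hΘsa : Semianalytic Θ)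
    (hΘdim : dimH Θ = (d : ℝ≥0∞))
    (p : Fin m → (Fin d → ℝ) → ℝ) (hp : IsPolynomialMap p)
    (hsimplex : ∀ θ ∈ Θ, (∀ i, 0 ≤ p i θ) ∧ ∑ i, p i θ = 1)
    (phat : Fin m → ℝ)
    (hmodel : ∃ θ ∈ Θ, ∀ i, p i θ = phat i)
    (hpos : ∀ i, 0 < phat i) :
    rlct Θ (fun θ => ∑ i, phat i * Real.log (phat i / p i θ))
      = rlct Θ (fun θ => ∑ i, (p i θ - phat i) ^ 2) ∧
    ∀ t : ℝ, 0 < t →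
      (IntegrableOn
          (fun θ => (∑ i, phat i * Real.log (phat i / p i θ)) ^ (-t)) Θ volume ↔
        IntegrableOn (fun θ => (∑ i, (p i θ - phat i) ^ 2) ^ (-t)) Θ volume) := by
  have main := main_iff Θ hΘc p hp hsimplex phat hmodel hpos
  refine ⟨?_, main⟩
  unfold rlct
  congr 1
  ext t
  simp only [Set.mem_setOf_eq]
  exact and_congr_right fun ht => main t ht

end Statement
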